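/- Let Ω be a bounded open subset of ℝ^n and let Q = (a,b)^n be an open cube with the closure of Ω contained in Q. For every continuous function σ on the closure of Ω with σ > 0 everywhere on the closure of Ω, and every ε > 0, there exist a continuous function σ_e on the closed cube [a,b]^n with σ_e > 0 everywhere, σ_e = σ on the closure of Ω, and a positive integer k such that the rescaled multivariate Bernstein polynomial B_k(σ_e) is strictly positive on [a,b]^n and sup over the closure of Ω of |σ - B_k(σ_e)| ≤ ε. In particular, the set of restrictions to the closure of Ω of such Bernstein polynomials is dense, for the supremum norm, in the set of continuous functions on the closure of Ω that are positive everywhere on the closure of Ω. -/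

import Mathlib

/-- The Bernstein basis polynomial `p_{k,j}(t) = C(k,j) t^j (1-t)^{k-j}`. -/
noncomputable def bernsteinBasis (k j : ℕ) (t : ℝ) : ℝ :=
  (k.choose j : ℝ) * t ^ j * (1 - t) ^ (k - j)

/-- The rescaled multivariate Bernstein polynomial on the cube `[a,b]^n`:
`B_k(f)(x) = Σ_j f(a + (j/k)(b-a)) ∏_i p_{k, j_i}((x_i - a)/(b - a))`. -/
noncomputable def bernsteinCubeScaled (a b : ℝ) (n k : ℕ) (f : (Fin n → ℝ) → ℝ)
    (x : Fin n → ℝ) : ℝ :=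
  ∑ j : Fin n → Fin (k + 1),
    f (fun i => a + (((j i : ℕ) : ℝ) / (k : ℝ)) * (b - a)) *
      ∏ i, bernsteinBasis k (j i) ((x i - a) / (b - a))

open Finset in
lemma bernsteinBasis_nonneg (k j : ℕ) {t : ℝ} (ht : t ∈ Set.Icc (0:ℝ) 1) :
    0 ≤ bernsteinBasis k j t :=
  mul_nonneg (mul_nonneg (Nat.cast_nonneg _) (pow_nonneg ht.1 _))
    (pow_nonneg (by linarith [ht.2]) _)

lemma bernsteinBasis_eq (k : ℕ) (j : Fin (k+1)) {t : ℝ} (ht : t ∈ Set.Icc (0:ℝ) 1) :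
    bernsteinBasis k j t = bernstein k j ⟨t, ht⟩ := by
  simp [bernsteinBasis, bernstein_apply]

lemma sum_bernsteinBasis (k : ℕ) {t : ℝ} (ht : t ∈ Set.Icc (0:ℝ) 1) :
    ∑ j : Fin (k+1), bernsteinBasis k j t = 1 := by
  rw [Finset.sum_congr rfl fun j _ => bernsteinBasis_eq k j ht]
  exact bernstein.probability k ⟨t, ht⟩

lemma variance_bernsteinBasis_le (k : ℕ) (hk : 0 < k) {t : ℝ} (ht : t ∈ Set.Icc (0:ℝ) 1) :
    ∑ j : Fin (k+1), (t - (j : ℝ)/(k:ℝ))^2 * bernsteinBasis k j t ≤ 1/(4*k) := by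
  have hk' : (0:ℝ) < k := by exact_mod_cast hk
  have hv := bernstein.variance (n := k) hk.ne' ⟨t, ht⟩
  have : ∑ j : Fin (k+1), (t - (j : ℝ)/(k:ℝ))^2 * bernsteinBasis k j t
      = t * (1 - t) / k := by
    rw [Finset.sum_congr rfl fun j _ => by rw [bernsteinBasis_eq k j ht]]
    simpa [bernstein.z] using hv
  rw [this, div_le_div_iff₀ hk' (by positivity)]
  nlinarith [sq_nonneg (2*t - 1), hk']

noncomputable def bCube (n k : ℕ) (g : (Fin n → ℝ) → ℝ) (t : Fin n → ℝ) : ℝ :=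
  ∑ j : Fin n → Fin (k + 1),
    g (fun i => ((j i : ℕ) : ℝ) / (k : ℝ)) * ∏ i, bernsteinBasis k (j i) (t i)

lemma prodBasis_nonneg {n k : ℕ} {t : Fin n → ℝ} (ht : ∀ i, t i ∈ Set.Icc (0:ℝ) 1)
    (j : Fin n → Fin (k+1)) : 0 ≤ ∏ i, bernsteinBasis k (j i) (t i) :=
  Finset.prod_nonneg fun i _ => bernsteinBasis_nonneg k (j i) (ht i)

lemma sum_prodBasis {n k : ℕ} {t : Fin n → ℝ} (ht : ∀ i, t i ∈ Set.Icc (0:ℝ) 1) :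
    ∑ j : Fin n → Fin (k+1), ∏ i, bernsteinBasis k (j i) (t i) = 1 := by
  have h := Finset.prod_univ_sum (fun _ : Fin n => (Finset.univ : Finset (Fin (k+1))))
    (fun i m => bernsteinBasis k m (t i))
  rw [Fintype.piFinset_univ] at h
  rw [← h]
  exact Finset.prod_eq_one fun i _ => sum_bernsteinBasis k (ht i)

lemma coord_variance_le {n k : ℕ} (hk : 0 < k) {t : Fin n → ℝ}
    (ht : ∀ i, t i ∈ Set.Icc (0:ℝ) 1) (i₀ : Fin n) :
    ∑ j : Fin n → Fin (k+1),
      (t i₀ - ((j i₀ : ℕ) : ℝ)/(k:ℝ))^2 * ∏ i, bernsteinBasis k (j i) (t i) ≤ 1/(4*k) := by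
  set f : ∀ i : Fin n, Fin (k+1) → ℝ := fun i m =>
    (if i = i₀ then (t i - ((m : ℕ) : ℝ)/(k:ℝ))^2 else 1) * bernsteinBasis k m (t i) with hf
  have step1 : ∀ j : Fin n → Fin (k+1),
      (t i₀ - ((j i₀ : ℕ) : ℝ)/(k:ℝ))^2 * ∏ i, bernsteinBasis k (j i) (t i)
        = ∏ i, f i (j i) := by
    intro j
    rw [hf]
    simp only [Finset.prod_mul_distrib]
    congr 1
    rw [Finset.prod_ite_eq' Finset.univ i₀ (fun i => (t i - ((j i : ℕ) : ℝ)/(k:ℝ))^2)]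
    simp
  rw [Finset.sum_congr rfl fun j _ => step1 j]
  have h := Finset.prod_univ_sum (fun _ : Fin n => (Finset.univ : Finset (Fin (k+1)))) f
  rw [Fintype.piFinset_univ] at h
  rw [← h]
  have step2 : ∏ i, ∑ m : Fin (k+1), f i m
      = ∑ m : Fin (k+1), (t i₀ - ((m : ℕ) : ℝ)/(k:ℝ))^2 * bernsteinBasis k m (t i₀) := by
    rw [Finset.prod_eq_single i₀]
    · simp [hf]
    · intro i _ hi
      simp [hf, hi, sum_bernsteinBasis k (ht i)]
    · simp
  rw [step2]
  exact variance_bernsteinBasis_le k hk (ht i₀)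

lemma bCube_ge {n k : ℕ} {g : (Fin n → ℝ) → ℝ} {m : ℝ} (hm : ∀ t, m ≤ g t)
    {t : Fin n → ℝ} (ht : ∀ i, t i ∈ Set.Icc (0:ℝ) 1) : m ≤ bCube n k g t := by
  have : ∑ j : Fin n → Fin (k+1), m * ∏ i, bernsteinBasis k (j i) (t i)
      ≤ bCube n k g t := by
    apply Finset.sum_le_sum
    intro j _
    exact mul_le_mul_of_nonneg_right (hm _) (prodBasis_nonneg ht j)
  calc m = m * ∑ j : Fin n → Fin (k+1), ∏ i, bernsteinBasis k (j i) (t i) := by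
        rw [sum_prodBasis ht, mul_one]
    _ = ∑ j : Fin n → Fin (k+1), m * ∏ i, bernsteinBasis k (j i) (t i) := Finset.mul_sum ..
    _ ≤ bCube n k g t := this

lemma bCube_approx {n k : ℕ} (hk : 0 < k) {g : (Fin n → ℝ) → ℝ} {M δ ε2 : ℝ}
    (hδ : 0 < δ) (hε2 : 0 ≤ ε2)
    (hM : ∀ t : Fin n → ℝ, (∀ i, t i ∈ Set.Icc (0:ℝ) 1) → |g t| ≤ M)
    (hunif : ∀ s t : Fin n → ℝ, (∀ i, s i ∈ Set.Icc (0:ℝ) 1) →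
      (∀ i, t i ∈ Set.Icc (0:ℝ) 1) → (∀ i, |s i - t i| ≤ δ) → |g s - g t| ≤ ε2)
    {t : Fin n → ℝ} (ht : ∀ i, t i ∈ Set.Icc (0:ℝ) 1) :
    |g t - bCube n k g t| ≤ ε2 + (2*M/δ^2) * (n * (1/(4*k))) := by
  have hM0 : 0 ≤ M := (abs_nonneg _).trans (hM t ht)
  have hgrid : ∀ j : Fin n → Fin (k+1), ∀ i : Fin n,
      ((j i : ℕ) : ℝ)/(k:ℝ) ∈ Set.Icc (0:ℝ) 1 := by
    intro j i
    have hk' : (0:ℝ) < k := by exact_mod_cast hk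
    constructor
    · positivity
    · rw [div_le_one hk']
      exact_mod_cast Fin.is_le (j i)
  set P : (Fin n → Fin (k+1)) → ℝ := fun j => ∏ i, bernsteinBasis k (j i) (t i) with hP
  set jk : (Fin n → Fin (k+1)) → (Fin n → ℝ) := fun j i => ((j i : ℕ) : ℝ)/(k:ℝ) with hjk
  have h1 : g t - bCube n k g t = ∑ j : Fin n → Fin (k+1), (g t - g (jk j)) * P j := by
    have hb : bCube n k g t = ∑ j : Fin n → Fin (k+1), g (jk j) * P j := rfl
    have h2 : ∑ j : Fin n → Fin (k+1), (g t - g (jk j)) * P j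
        = (∑ j : Fin n → Fin (k+1), g t * P j) - ∑ j : Fin n → Fin (k+1), g (jk j) * P j := by
      rw [← Finset.sum_sub_distrib]
      exact Finset.sum_congr rfl fun j _ => by rw [sub_mul]
    rw [h2, ← Finset.mul_sum, hP, sum_prodBasis ht, mul_one, hb]
  set S : (Fin n → Fin (k+1)) → ℝ := fun j => ∑ i, (t i - jk j i)^2 with hS
  have hterm : ∀ j : Fin n → Fin (k+1),
      |g t - g (jk j)| * P j ≤ ε2 * P j + (2*M/δ^2) * (S j * P j) := by
    intro j
    have hPj : 0 ≤ P j := prodBasis_nonneg ht j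
    have hS0 : 0 ≤ S j := Finset.sum_nonneg fun i _ => sq_nonneg _
    by_cases hclose : ∀ i, |t i - jk j i| ≤ δ
    · have h2 : |g t - g (jk j)| ≤ ε2 := hunif t (jk j) ht (hgrid j) hclose
      have : |g t - g (jk j)| * P j ≤ ε2 * P j := mul_le_mul_of_nonneg_right h2 hPj
      nlinarith [mul_nonneg (mul_nonneg (by positivity : (0:ℝ) ≤ 2*M/δ^2) hS0) hPj]
    · push_neg at hclose
      obtain ⟨i₀, hi₀⟩ := hclose
      have hSδ : δ^2 ≤ S j := by
        have h3 : δ^2 ≤ (t i₀ - jk j i₀)^2 := by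
          have := le_of_lt hi₀
          nlinarith [abs_nonneg (t i₀ - jk j i₀), sq_abs (t i₀ - jk j i₀)]
        refine h3.trans ?_
        rw [hS]
        exact Finset.single_le_sum (f := fun i => (t i - jk j i)^2)
          (fun i _ => sq_nonneg _) (Finset.mem_univ i₀)
      have h2M : |g t - g (jk j)| ≤ 2*M := by
        calc |g t - g (jk j)| ≤ |g t| + |g (jk j)| := abs_sub _ _
          _ ≤ M + M := add_le_add (hM t ht) (hM (jk j) (hgrid j))
          _ = 2*M := by ring
      have hfac : 2*M ≤ 2*M/δ^2 * S j := by
        rw [div_mul_eq_mul_div, le_div_iff₀ (by positivity)]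
        nlinarith
      have : |g t - g (jk j)| * P j ≤ (2*M/δ^2 * S j) * P j :=
        mul_le_mul_of_nonneg_right (h2M.trans hfac) hPj
      rw [mul_assoc] at this
      linarith [mul_nonneg hε2 hPj]
    done
  calc |g t - bCube n k g t|
      ≤ ∑ j : Fin n → Fin (k+1), |g t - g (jk j)| * P j := by
        rw [h1]
        refine (Finset.abs_sum_le_sum_abs _ _).trans (le_of_eq ?_)
        exact Finset.sum_congr rfl fun j _ => by
          rw [abs_mul, abs_of_nonneg (prodBasis_nonneg ht j)]
    _ ≤ ∑ j : Fin n → Fin (k+1), (ε2 * P j + (2*M/δ^2) * (S j * P j)) :=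
        Finset.sum_le_sum fun j _ => hterm j
    _ = ε2 * (∑ j : Fin n → Fin (k+1), P j)
        + (2*M/δ^2) * ∑ j : Fin n → Fin (k+1), S j * P j := by
        rw [Finset.sum_add_distrib, ← Finset.mul_sum, ← Finset.mul_sum]
    _ ≤ ε2 + (2*M/δ^2) * (n * (1/(4*k))) := by
        have hsum1 : ∑ j : Fin n → Fin (k+1), P j = 1 := sum_prodBasis ht
        rw [hsum1, mul_one]
        have hSP : ∑ j : Fin n → Fin (k+1), S j * P j ≤ n * (1/(4*k)) := by
          have : ∑ j : Fin n → Fin (k+1), S j * P j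
              = ∑ i : Fin n, ∑ j : Fin n → Fin (k+1), (t i - jk j i)^2 * P j := by
            rw [Finset.sum_comm]
            exact Finset.sum_congr rfl fun j _ => by rw [hS, Finset.sum_mul]
          rw [this]
          calc ∑ i : Fin n, ∑ j : Fin n → Fin (k+1), (t i - jk j i)^2 * P j
              ≤ ∑ _i : Fin n, 1/(4*(k:ℝ)) :=
                Finset.sum_le_sum fun i _ => coord_variance_le hk ht i
            _ = n * (1/(4*k)) := by simp [Finset.sum_const, mul_comm]
        exact (add_le_add_iff_left ε2).mpr (mul_le_mul_of_nonneg_left hSP (by positivity))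

/-- Let `Ω ⊆ ℝⁿ` be bounded and open with `closure Ω` contained in the open cube `(a,b)^n`.
For every continuous `σ > 0` on `closure Ω` and every `ε > 0` there are a continuous positive
extension `σ_e` of `σ` to the closed cube `[a,b]^n` and a positive integer `k` such that the
rescaled Bernstein polynomial `B_k(σ_e)` is strictly positive on `[a,b]^n` and approximates `σ`
uniformly on `closure Ω` within `ε`. -/
theorem bernstein_dense_in_positive_continuous (n : ℕ) (a b : ℝ) (hab : a < b)
    (Ω : Set (Fin n → ℝ)) (hΩopen : IsOpen Ω) (hΩbdd : Bornology.IsBounded Ω)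
    (hΩQ : closure Ω ⊆ Set.pi Set.univ fun _ : Fin n => Set.Ioo a b)
    (σ : (Fin n → ℝ) → ℝ) (hσcont : ContinuousOn σ (closure Ω))
    (hσpos : ∀ x ∈ closure Ω, 0 < σ x) (ε : ℝ) (hε : 0 < ε) :
    ∃ σe : (Fin n → ℝ) → ℝ, ∃ k : ℕ, 0 < k ∧
      ContinuousOn σe (Set.pi Set.univ fun _ : Fin n => Set.Icc a b) ∧
      (∀ x ∈ Set.pi Set.univ fun _ : Fin n => Set.Icc a b, 0 < σe x) ∧
      (∀ x ∈ closure Ω, σe x = σ x) ∧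
      (∀ x ∈ Set.pi Set.univ fun _ : Fin n => Set.Icc a b,
        0 < bernsteinCubeScaled a b n k σe x) ∧
      (⨆ x : closure Ω, |σ x - bernsteinCubeScaled a b n k σe x|) ≤ ε := by
  have hba : 0 < b - a := sub_pos.2 hab
  have hK : IsCompact (closure Ω) :=
    Metric.isCompact_of_isClosed_isBounded isClosed_closure hΩbdd.closure
  obtain ⟨m, hm0, hmK⟩ : ∃ m : ℝ, 0 < m ∧ ∀ x ∈ closure Ω, m ≤ σ x := by
    rcases Set.eq_empty_or_nonempty (closure Ω) with h | h
    · exact ⟨1, one_pos, by simp [h]⟩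
    · obtain ⟨x₀, hx₀, hmin⟩ := hK.exists_isMinOn h hσcont
      exact ⟨σ x₀, hσpos x₀ hx₀, fun x hx => hmin hx⟩
  obtain ⟨g0, hg0⟩ := ContinuousMap.exists_restrict_eq (isClosed_closure (s := Ω))
      ⟨(closure Ω).restrict σ, continuousOn_iff_continuous_restrict.mp hσcont⟩
  have hg0' : ∀ x ∈ closure Ω, g0 x = σ x := fun x hx => DFunLike.congr_fun hg0 ⟨x, hx⟩
  set σe : (Fin n → ℝ) → ℝ := fun x => max (g0 x) m with hσedef
  have hσecont : Continuous σe := g0.continuous.max continuous_const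
  have hσem : ∀ x, m ≤ σe x := fun x => le_max_right _ _
  have hσeK : ∀ x ∈ closure Ω, σe x = σ x := fun x hx => by
    rw [hσedef]; dsimp only; rw [hg0' x hx]; exact max_eq_left (hmK x hx)
  set G : (Fin n → ℝ) → ℝ := fun t => σe (fun i => a + t i * (b - a)) with hGdef
  have hGcont : Continuous G := by
    apply hσecont.comp
    exact continuous_pi fun i => by fun_prop
  have hGm : ∀ t, m ≤ G t := fun t => hσem _
  set C : Set (Fin n → ℝ) := Set.pi Set.univ fun _ : Fin n => Set.Icc (0:ℝ) 1 with hCdef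
  have hCcompact : IsCompact C := isCompact_univ_pi fun _ => isCompact_Icc
  obtain ⟨M0, hM0⟩ := hCcompact.exists_bound_of_continuousOn hGcont.continuousOn
  set M := max M0 1 with hMdef
  have hM : ∀ t : Fin n → ℝ, (∀ i, t i ∈ Set.Icc (0:ℝ) 1) → |G t| ≤ M := by
    intro t htc
    have : t ∈ C := fun i _ => htc i
    calc |G t| = ‖G t‖ := (Real.norm_eq_abs _).symm
      _ ≤ M0 := hM0 t this
      _ ≤ M := le_max_left _ _
  have hUC := hCcompact.uniformContinuousOn_of_continuous hGcont.continuousOn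
  rw [Metric.uniformContinuousOn_iff] at hUC
  obtain ⟨δ0, hδ0, hδ'⟩ := hUC (ε/2) (half_pos hε)
  set δ := δ0/2 with hδdef
  have hδpos : 0 < δ := half_pos hδ0
  have hunif : ∀ s t : Fin n → ℝ, (∀ i, s i ∈ Set.Icc (0:ℝ) 1) →
      (∀ i, t i ∈ Set.Icc (0:ℝ) 1) → (∀ i, |s i - t i| ≤ δ) → |G s - G t| ≤ ε/2 := by
    intro s t hs ht hst
    have hd : dist s t ≤ δ := by
      rw [dist_pi_le_iff hδpos.le]
      intro i; rw [Real.dist_eq]; exact hst i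
    have := hδ' s (fun i _ => hs i) t (fun i _ => ht i)
      (lt_of_le_of_lt hd (by rw [hδdef]; linarith))
    rw [Real.dist_eq] at this; exact this.le
  set k := ⌈(2*M/δ^2) * ((n:ℝ) * (1/4)) / (ε/2)⌉₊ + 1 with hkdef
  have hkpos : 0 < k := Nat.succ_pos _
  have hk' : (0:ℝ) < k := by exact_mod_cast hkpos
  have hkey : (2*M/δ^2) * ((n:ℝ) * (1/(4*(k:ℝ)))) ≤ ε/2 := by
    have hX : (2*M/δ^2) * ((n:ℝ) * (1/4)) / (ε/2) ≤ (k:ℝ) := by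
      calc (2*M/δ^2) * ((n:ℝ) * (1/4)) / (ε/2)
          ≤ (⌈(2*M/δ^2) * ((n:ℝ) * (1/4)) / (ε/2)⌉₊ : ℝ) := Nat.le_ceil _
        _ ≤ (k:ℝ) := by rw [hkdef]; push_cast; linarith
    rw [div_le_iff₀ (half_pos hε)] at hX
    rw [show (2*M/δ^2) * ((n:ℝ) * (1/(4*(k:ℝ)))) = (2*M/δ^2) * ((n:ℝ) * (1/4)) / (k:ℝ) by
      rw [eq_div_iff hk'.ne']; field_simp]
    rw [div_le_iff₀ hk']
    nlinarith
  have hT : ∀ x : Fin n → ℝ, x ∈ (Set.pi Set.univ fun _ : Fin n => Set.Icc a b) →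
      ∀ i, (x i - a)/(b-a) ∈ Set.Icc (0:ℝ) 1 := by
    intro x hx i
    have hxi := hx i trivial
    constructor
    · exact div_nonneg (by linarith [hxi.1]) hba.le
    · rw [div_le_one hba]; linarith [hxi.2]
  have hBeq : ∀ x : Fin n → ℝ,
      bernsteinCubeScaled a b n k σe x = bCube n k G (fun i => (x i - a)/(b-a)) :=
    fun x => rfl
  refine ⟨σe, k, hkpos, hσecont.continuousOn,
    fun x _ => lt_of_lt_of_le hm0 (hσem x), hσeK, ?_, ?_⟩
  · intro x hx
    rw [hBeq x]
    exact lt_of_lt_of_le hm0 (bCube_ge hGm (hT x hx))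
  · apply Real.iSup_le _ hε.le
    rintro ⟨x, hx⟩
    have hxQ : x ∈ (Set.pi Set.univ fun _ : Fin n => Set.Icc a b) := by
      intro i _
      exact Set.Ioo_subset_Icc_self (hΩQ hx i trivial)
    have hTx := hT x hxQ
    have hσx : σ x = G (fun i => (x i - a)/(b-a)) := by
      rw [hGdef]
      dsimp only
      rw [show (fun i => a + (x i - a)/(b-a) * (b - a)) = x from funext fun i => by
        field_simp; ring]
      exact (hσeK x hx).symm
    calc |σ x - bernsteinCubeScaled a b n k σe x|
        = |G (fun i => (x i - a)/(b-a)) - bCube n k G (fun i => (x i - a)/(b-a))| := by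
          rw [hBeq x, hσx]
      _ ≤ ε/2 + (2*M/δ^2) * ((n:ℝ) * (1/(4*(k:ℝ)))) :=
          bCube_approx hkpos hδpos (half_pos hε).le hM hunif hTx
      _ ≤ ε/2 + ε/2 := (add_le_add_iff_left _).mpr hkey
      _ = ε := add_halves ε
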